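/- Let S belong to the homoclinic group of T, i.e., μ(T^{-n}S T^n B Δ B) → 0 as n → ∞ for every measurable B. Then for any fixed integer i and any measurable sets A,B,C, μ(S^{-i}A ∩ T^m B ∩ T^{m+n}C) − μ(A ∩ T^m B ∩ T^{m+n}C) → 0 as m,n → +∞. -/

import Mathlib

open MeasureTheory Filter
open scoped symmDiff
set_option linter.unusedSectionVars false

section HomoclinicAux

variable {X : Type*} [MeasurableSpace X] {μ : Measure X} [IsProbabilityMeasure μ]

private lemma abs_toReal_sub_le_symmDiff (μ : Measure X) [IsProbabilityMeasure μ]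
    (P Q : Set X) :
    |(μ P).toReal - (μ Q).toReal| ≤ (μ (P ∆ Q)).toReal := by
  have key : ∀ U V : Set X, (μ U).toReal - (μ V).toReal ≤ (μ (U ∆ V)).toReal := by
    intro U V
    have h1 : μ U ≤ μ V + μ (U ∆ V) := by
      refine le_trans (measure_mono ?_) (measure_union_le V (U ∆ V))
      intro x hx
      by_cases h : x ∈ V
      · exact Or.inl h
      · exact Or.inr (Set.mem_symmDiff.mpr (Or.inl ⟨hx, h⟩))
    have h2 := ENNReal.toReal_mono (by finiteness) h1
    rw [ENNReal.toReal_add (by finiteness) (by finiteness)] at h2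
    linarith
  have h1 := key P Q
  have h2 := key Q P
  rw [symmDiff_comm] at h2
  exact abs_sub_le_iff.mpr ⟨h1, h2⟩

private lemma meas_image {e : X ≃ᵐ X} (he : MeasurePreserving e μ μ) (E : Set X) :
    μ (⇑e '' E) = μ E := by
  rw [MeasurableEquiv.image_eq_preimage_symm]
  exact (he.symm e).measure_preimage_equiv E

/-- Natural iterate of a measurable equivalence, as a measurable equivalence. -/
private def mpow (e : X ≃ᵐ X) : ℕ → (X ≃ᵐ X)
  | 0 => MeasurableEquiv.refl X
  | n + 1 => (mpow e n).trans e

private lemma mpow_coe (e : X ≃ᵐ X) : ∀ n, ⇑(mpow e n) = (⇑e)^[n]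
  | 0 => rfl
  | n + 1 => by
    show ⇑((mpow e n).trans e) = _
    rw [MeasurableEquiv.coe_trans, mpow_coe e n, Function.iterate_succ']

private lemma mpow_symm_coe (e : X ≃ᵐ X) : ∀ n, ⇑(mpow e n).symm = (⇑e.symm)^[n]
  | 0 => rfl
  | n + 1 => by
    show ⇑(mpow e n).symm ∘ ⇑e.symm = _
    rw [mpow_symm_coe e n, Function.iterate_succ]

private lemma mpow_mp {e : X ≃ᵐ X} (he : MeasurePreserving e μ μ) :
    ∀ n, MeasurePreserving (mpow e n) μ μ
  | 0 => MeasurePreserving.id μ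
  | n + 1 => by
    exact he.comp (mpow_mp he n)


private lemma meas_image_symmDiff {e : X ≃ᵐ X} (he : MeasurePreserving e μ μ)
    (E F : Set X) : μ ((⇑e '' E) ∆ (⇑e '' F)) = μ (E ∆ F) := by
  rw [← Set.image_symmDiff e.injective, meas_image he]

private lemma meas_image' {e : X ≃ᵐ X} (he : MeasurePreserving e μ μ) {f : X → X}
    (hf : ⇑e = f) (E : Set X) : μ (f '' E) = μ E := hf ▸ meas_image he E

/-- Homoclinicity passes to natural iterates. -/
private lemma hom_pow (T : X ≃ᵐ X) (hT : MeasurePreserving T μ μ)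
    (U : X ≃ᵐ X) (hU : MeasurePreserving U μ μ)
    (hhom : ∀ B : Set X, MeasurableSet B →
      Tendsto (fun n : ℕ => μ (((⇑T.symm)^[n] '' (⇑U '' ((⇑T)^[n] '' B))) ∆ B))
        atTop (nhds 0)) (k : ℕ) (B : Set X) (hB : MeasurableSet B) :
    Tendsto (fun n : ℕ => μ (((⇑T.symm)^[n] '' ((⇑U)^[k] '' ((⇑T)^[n] '' B))) ∆ B))
      atTop (nhds 0) := by
  have hTl : ∀ n : ℕ, ∀ E : Set X, (⇑T.symm)^[n] '' ((⇑T)^[n] '' E) = E := fun n E =>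
    Function.LeftInverse.image_image
      ((Function.LeftInverse.iterate T.symm_apply_apply n)) E
  have hTr : ∀ n : ℕ, ∀ E : Set X, (⇑T)^[n] '' ((⇑T.symm)^[n] '' E) = E := fun n E =>
    Function.LeftInverse.image_image
      ((Function.LeftInverse.iterate T.apply_symm_apply n)) E
  induction k with
  | zero =>
    simpa [hTl] using tendsto_const_nhds (x := (0 : ENNReal)) (f := atTop (α := ℕ))
  | succ k ih =>
    -- c_n(U^{k+1}) B = c_n(U) (c_n(U^k) B)
    have hsplit : ∀ n : ℕ,
        (⇑T.symm)^[n] '' ((⇑U)^[k+1] '' ((⇑T)^[n] '' B)) =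
        (⇑T.symm)^[n] '' (⇑U '' ((⇑T)^[n] ''
          ((⇑T.symm)^[n] '' ((⇑U)^[k] '' ((⇑T)^[n] '' B))))) := by
      intro n
      rw [hTr, Function.iterate_succ', Set.image_comp]
    have hbound : ∀ n : ℕ,
        μ (((⇑T.symm)^[n] '' ((⇑U)^[k+1] '' ((⇑T)^[n] '' B))) ∆ B) ≤
          μ (((⇑T.symm)^[n] '' ((⇑U)^[k] '' ((⇑T)^[n] '' B))) ∆ B)
          + μ (((⇑T.symm)^[n] '' (⇑U '' ((⇑T)^[n] '' B))) ∆ B) := by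
      intro n
      set Q := (⇑T.symm)^[n] '' ((⇑U)^[k] '' ((⇑T)^[n] '' B)) with hQ
      set P := (⇑T.symm)^[n] '' (⇑U '' ((⇑T)^[n] '' Q)) with hP
      have h1 : μ (P ∆ B) ≤ μ (P ∆ ((⇑T.symm)^[n] '' (⇑U '' ((⇑T)^[n] '' B))))
          + μ (((⇑T.symm)^[n] '' (⇑U '' ((⇑T)^[n] '' B))) ∆ B) :=
        measure_symmDiff_le _ _ _
      -- the first term equals μ (Q ∆ B)
      have h2 : μ (P ∆ ((⇑T.symm)^[n] '' (⇑U '' ((⇑T)^[n] '' B)))) = μ (Q ∆ B) := by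
        rw [hP]
        rw [← Set.image_symmDiff (Function.Injective.iterate T.symm.injective n),
          ← Set.image_symmDiff U.injective,
          ← Set.image_symmDiff (Function.Injective.iterate T.injective n),
          meas_image' (mpow_mp (hT.symm T) n) (mpow_coe T.symm n),
          meas_image hU, meas_image' (mpow_mp hT n) (mpow_coe T n)]
      rw [hsplit n]
      calc μ (P ∆ B) ≤ _ := h1
        _ = μ (Q ∆ B) + _ := by rw [h2]
    have hlim : Tendsto (fun n : ℕ =>
        μ (((⇑T.symm)^[n] '' ((⇑U)^[k] '' ((⇑T)^[n] '' B))) ∆ B)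
        + μ (((⇑T.symm)^[n] '' (⇑U '' ((⇑T)^[n] '' B))) ∆ B)) atTop (nhds 0) := by
      simpa using Tendsto.add ih (hhom B hB)
    exact tendsto_of_tendsto_of_tendsto_of_le_of_le tendsto_const_nhds hlim
      (fun n => zero_le) hbound


private lemma iter_image_left (T : X ≃ᵐ X) (n : ℕ) (E : Set X) :
    (⇑T.symm)^[n] '' ((⇑T)^[n] '' E) = E :=
  Function.LeftInverse.image_image (Function.LeftInverse.iterate T.symm_apply_apply n) E

private lemma iter_image_right (T : X ≃ᵐ X) (n : ℕ) (E : Set X) :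
    (⇑T)^[n] '' ((⇑T.symm)^[n] '' E) = E :=
  Function.LeftInverse.image_image (Function.LeftInverse.iterate T.apply_symm_apply n) E

private lemma conj_meas (T : X ≃ᵐ X) (hT : MeasurePreserving T μ μ)
    (U : X ≃ᵐ X) (hU : MeasurePreserving U μ μ) (n : ℕ) (Z W : Set X) :
    μ (((⇑T.symm)^[n] '' (⇑U '' ((⇑T)^[n] '' Z)))
        ∆ ((⇑T.symm)^[n] '' (⇑U '' ((⇑T)^[n] '' W)))) = μ (Z ∆ W) := by
  rw [← Set.image_symmDiff (Function.Injective.iterate T.symm.injective n),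
    ← Set.image_symmDiff U.injective,
    ← Set.image_symmDiff (Function.Injective.iterate T.injective n),
    meas_image' (mpow_mp (hT.symm T) n) (mpow_coe T.symm n),
    meas_image hU, meas_image' (mpow_mp hT n) (mpow_coe T n)]

/-- Homoclinicity passes to the inverse. -/
private lemma hom_inv (T : X ≃ᵐ X) (hT : MeasurePreserving T μ μ)
    (U : X ≃ᵐ X) (hU : MeasurePreserving U μ μ)
    (hhom : ∀ B : Set X, MeasurableSet B →
      Tendsto (fun n : ℕ => μ (((⇑T.symm)^[n] '' (⇑U '' ((⇑T)^[n] '' B))) ∆ B))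
        atTop (nhds 0)) (B : Set X) (hB : MeasurableSet B) :
    Tendsto (fun n : ℕ => μ (((⇑T.symm)^[n] '' (⇑U.symm '' ((⇑T)^[n] '' B))) ∆ B))
      atTop (nhds 0) := by
  refine (hhom B hB).congr fun n => ?_
  set E := (⇑T.symm)^[n] '' (⇑U.symm '' ((⇑T)^[n] '' B)) with hE
  have hcE : (⇑T.symm)^[n] '' (⇑U '' ((⇑T)^[n] '' E)) = B := by
    rw [hE, iter_image_right,
      Function.LeftInverse.image_image U.apply_symm_apply, iter_image_left]
  calc μ (((⇑T.symm)^[n] '' (⇑U '' ((⇑T)^[n] '' B))) ∆ B)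
      = μ (((⇑T.symm)^[n] '' (⇑U '' ((⇑T)^[n] '' B)))
          ∆ ((⇑T.symm)^[n] '' (⇑U '' ((⇑T)^[n] '' E)))) := by rw [hcE]
    _ = μ (B ∆ E) := conj_meas T hT U hU n B E
    _ = μ (E ∆ B) := by rw [symmDiff_comm]

private lemma zpow_coe_cases (S : Equiv.Perm X) (j : ℤ) :
    (∃ k : ℕ, ⇑(S ^ j) = (⇑S)^[k]) ∨ (∃ k : ℕ, ⇑(S ^ j) = (⇑S.symm)^[k]) := by
  rcases Int.natAbs_eq j with h | h
  · refine Or.inl ⟨j.natAbs, ?_⟩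
    conv_lhs => rw [h, zpow_natCast]
    rw [Equiv.Perm.coe_pow]
  · refine Or.inr ⟨j.natAbs, ?_⟩
    conv_lhs => rw [h, zpow_neg, zpow_natCast, ← inv_pow]
    rw [Equiv.Perm.coe_pow]
    rfl

private lemma symmDiff_inter_sub (s t t' u u' : Set X) :
    ((s ∩ t ∩ u) ∆ (s ∩ t' ∩ u')) ⊆ (t ∆ t') ∪ (u ∆ u') := by
  intro x hx
  simp only [Set.mem_symmDiff, Set.mem_inter_iff, Set.mem_union] at *
  tauto

end HomoclinicAux

/-- If `S` is homoclinic for `T` (`μ(T^{-n} S T^n B Δ B) → 0` for every measurable `B`),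
then for any fixed integer `i` and measurable sets `A, B, C`,
`μ(S^{-i} A ∩ T^m B ∩ T^{m+n} C) − μ(A ∩ T^m B ∩ T^{m+n} C) → 0` as `m, n → ∞`. -/
theorem homoclinic_shift_asymptotic
    {X : Type*} [MeasurableSpace X] (μ : Measure X) [IsProbabilityMeasure μ]
    (T : X ≃ᵐ X) (hT : MeasurePreserving T μ μ)
    (S : Equiv.Perm X) (hSmeas : Measurable S) (hSmeas' : Measurable S.symm)
    (hS : MeasurePreserving S μ μ)
    (hhom : ∀ B : Set X, MeasurableSet B →
      Tendsto (fun n : ℕ => μ (((⇑T.symm)^[n] '' (S '' ((⇑T)^[n] '' B))) ∆ B))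
        atTop (nhds 0))
    (i : ℤ) (A B C : Set X) (hA : MeasurableSet A) (hB : MeasurableSet B)
    (hC : MeasurableSet C) :
    Tendsto
      (fun p : ℕ × ℕ =>
        (μ ((⇑(S ^ (-i)) '' A) ∩ (⇑T)^[p.1] '' B ∩ (⇑T)^[p.1 + p.2] '' C)).toReal
          - (μ (A ∩ (⇑T)^[p.1] '' B ∩ (⇑T)^[p.1 + p.2] '' C)).toReal)
      atTop (nhds 0) := by
  classical
  set Se : X ≃ᵐ X :=
    { toEquiv := S, measurable_toFun := hSmeas, measurable_invFun := hSmeas' } with hSedef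
  have hSemp : MeasurePreserving Se μ μ := hS
  have hhomSe : ∀ B : Set X, MeasurableSet B →
      Tendsto (fun n : ℕ => μ (((⇑T.symm)^[n] '' (⇑Se '' ((⇑T)^[n] '' B))) ∆ B))
        atTop (nhds 0) := hhom
  obtain ⟨V, hV, k, hcoe, hVhom⟩ :
      ∃ V : X ≃ᵐ X, MeasurePreserving V μ μ ∧ ∃ k : ℕ, ⇑(S ^ (-i)) = (⇑V)^[k] ∧
        (∀ B : Set X, MeasurableSet B →
          Tendsto (fun n : ℕ => μ (((⇑T.symm)^[n] '' (⇑V '' ((⇑T)^[n] '' B))) ∆ B))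
            atTop (nhds 0)) := by
    rcases zpow_coe_cases S (-i) with ⟨k, hk⟩ | ⟨k, hk⟩
    · exact ⟨Se, hSemp, k, hk, hhomSe⟩
    · exact ⟨Se.symm, hSemp.symm Se, k, hk, hom_inv T hT Se hSemp hhomSe⟩
  set σ : X → X := ⇑(S ^ (-i)) with hσdef
  have hσinj : Function.Injective σ := (S ^ (-i)).injective
  have hσmeas : ∀ E : Set X, μ (σ '' E) = μ E := fun E =>
    meas_image' (mpow_mp hV k) ((mpow_coe V k).trans hcoe.symm) E
  have hTsymmMeas : ∀ m : ℕ, ∀ E : Set X, μ E = μ ((⇑T.symm)^[m] '' E) := fun m E =>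
    (meas_image' (mpow_mp (hT.symm T) m) (mpow_coe T.symm m) E).symm
  have hBlim : Tendsto (fun n : ℕ => μ (((⇑T.symm)^[n] '' (σ '' ((⇑T)^[n] '' B))) ∆ B))
      atTop (nhds 0) := by
    rw [hcoe]; exact hom_pow T hT V hV hVhom k B hB
  have hClim : Tendsto (fun n : ℕ => μ (((⇑T.symm)^[n] '' (σ '' ((⇑T)^[n] '' C))) ∆ C))
      atTop (nhds 0) := by
    rw [hcoe]; exact hom_pow T hT V hV hVhom k C hC
  set gB : ℕ → ℝ := fun m => (μ (((⇑T.symm)^[m] '' (σ '' ((⇑T)^[m] '' B))) ∆ B)).toReal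
    with hgB
  set gC : ℕ → ℝ := fun m => (μ (((⇑T.symm)^[m] '' (σ '' ((⇑T)^[m] '' C))) ∆ C)).toReal
    with hgC
  have hptwise : ∀ p : ℕ × ℕ,
      ‖(μ ((σ '' A) ∩ (⇑T)^[p.1] '' B ∩ (⇑T)^[p.1 + p.2] '' C)).toReal
        - (μ (A ∩ (⇑T)^[p.1] '' B ∩ (⇑T)^[p.1 + p.2] '' C)).toReal‖
        ≤ gB p.1 + gC (p.1 + p.2) := by
    intro p
    have hre : μ (A ∩ (⇑T)^[p.1] '' B ∩ (⇑T)^[p.1 + p.2] '' C)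
        = μ ((σ '' A) ∩ (σ '' ((⇑T)^[p.1] '' B)) ∩ (σ '' ((⇑T)^[p.1 + p.2] '' C))) := by
      rw [← Set.image_inter hσinj, ← Set.image_inter hσinj, hσmeas]
    calc ‖(μ ((σ '' A) ∩ (⇑T)^[p.1] '' B ∩ (⇑T)^[p.1 + p.2] '' C)).toReal
        - (μ (A ∩ (⇑T)^[p.1] '' B ∩ (⇑T)^[p.1 + p.2] '' C)).toReal‖
        = |(μ ((σ '' A) ∩ (⇑T)^[p.1] '' B ∩ (⇑T)^[p.1 + p.2] '' C)).toReal
          - (μ ((σ '' A) ∩ (σ '' ((⇑T)^[p.1] '' B)) ∩ (σ '' ((⇑T)^[p.1 + p.2] '' C)))).toReal| := by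
          rw [Real.norm_eq_abs, hre]
      _ ≤ (μ (((σ '' A) ∩ (⇑T)^[p.1] '' B ∩ (⇑T)^[p.1 + p.2] '' C)
            ∆ ((σ '' A) ∩ (σ '' ((⇑T)^[p.1] '' B)) ∩ (σ '' ((⇑T)^[p.1 + p.2] '' C))))).toReal :=
          abs_toReal_sub_le_symmDiff μ _ _
      _ ≤ (μ ((((⇑T)^[p.1] '' B) ∆ (σ '' ((⇑T)^[p.1] '' B)))
            ∪ (((⇑T)^[p.1 + p.2] '' C) ∆ (σ '' ((⇑T)^[p.1 + p.2] '' C))))).toReal :=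
          ENNReal.toReal_mono (by finiteness)
            (measure_mono (symmDiff_inter_sub _ _ _ _ _))
      _ ≤ ((μ (((⇑T)^[p.1] '' B) ∆ (σ '' ((⇑T)^[p.1] '' B))))
            + (μ (((⇑T)^[p.1 + p.2] '' C) ∆ (σ '' ((⇑T)^[p.1 + p.2] '' C))))).toReal :=
          ENNReal.toReal_mono (by finiteness) (measure_union_le _ _)
      _ = (μ (((⇑T)^[p.1] '' B) ∆ (σ '' ((⇑T)^[p.1] '' B)))).toReal
            + (μ (((⇑T)^[p.1 + p.2] '' C) ∆ (σ '' ((⇑T)^[p.1 + p.2] '' C)))).toReal :=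
          ENNReal.toReal_add (by finiteness) (by finiteness)
      _ = gB p.1 + gC (p.1 + p.2) := by
          congr 1
          · rw [hgB]
            rw [hTsymmMeas p.1 ((((⇑T)^[p.1] '' B) ∆ (σ '' ((⇑T)^[p.1] '' B)))),
              Set.image_symmDiff (Function.Injective.iterate T.symm.injective p.1),
              iter_image_left, symmDiff_comm]
          · rw [hgC]
            rw [hTsymmMeas (p.1 + p.2)
                ((((⇑T)^[p.1 + p.2] '' C) ∆ (σ '' ((⇑T)^[p.1 + p.2] '' C)))),
              Set.image_symmDiff (Function.Injective.iterate T.symm.injective (p.1 + p.2)),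
              iter_image_left, symmDiff_comm]
  have hgt : Tendsto gB atTop (nhds 0) := by
    have := (ENNReal.tendsto_toReal (a := 0) (by simp)).comp hBlim
    exact this
  have hht : Tendsto gC atTop (nhds 0) := by
    have := (ENNReal.tendsto_toReal (a := 0) (by simp)).comp hClim
    exact this
  have h1 : Tendsto (fun p : ℕ × ℕ => p.1) atTop atTop := by
    rw [← prod_atTop_atTop_eq]; exact tendsto_fst
  have h2 : Tendsto (fun p : ℕ × ℕ => p.1 + p.2) atTop atTop :=
    tendsto_atTop_mono (fun p => Nat.le_add_right _ _) h1
  have hbt : Tendsto (fun p : ℕ × ℕ => gB p.1 + gC (p.1 + p.2)) atTop (nhds 0) := by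
    simpa using (hgt.comp h1).add (hht.comp h2)
  exact squeeze_zero_norm hptwise hbt
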